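/- Global characterization of the Łojasiewicz inequality for convex functions: let φ ∈ 𝒦(0,+∞) and c > 0. (i) If φ′(f(x))·‖∂⁰f(x)‖ ≥ 1 for all x with f(x) > 0, then dist(x, S) ≤ φ(f(x)) for all x with f(x) > 0. (ii) Conversely, if s·φ′(s) ≥ c·φ(s) for all s > 0 (moderate behavior) and φ(f(x)) ≥ dist(x, S) for all x with f(x) > 0, then φ′(f(x))·‖∂⁰f(x)‖ ≥ c for all x with f(x) > 0. (Corollary 3.3.) -/

import Mathlib

open Metric Set Filter
open scoped RealInnerProductSpace
open scoped Topology

noncomputable section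

variable {H : Type*} [NormedAddCommGroup H] [InnerProductSpace ℝ H] [CompleteSpace H]

/-- The convex subdifferential of an extended-real-valued function:
`∂f(x) = {u : f(y) ≥ f(x) + ⟨u, y - x⟩ for all y}`. -/
def subdiff (f : H → EReal) (x : H) : Set H :=
  {u | ∀ y : H, f x + ((⟪u, y - x⟫ : ℝ) : EReal) ≤ f y}

/-- The set of global minimizers of `f`. -/
def argminSet (f : H → EReal) : Set H := {x | ∀ y, f x ≤ f y}

set_option maxHeartbeats 1000000


lemma ER_toReal_pos {x : EReal} (h : 0 < x) (h' : x ≠ ⊤) : 0 < x.toReal := by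
  have hb : x ≠ ⊥ := ne_bot_of_gt h
  have := EReal.coe_toReal h' hb
  rw [← this, ← EReal.coe_zero, EReal.coe_lt_coe_iff] at h
  exact h

lemma ER_toReal_nonneg {x : EReal} (h : 0 ≤ x) : 0 ≤ x.toReal := by
  rcases eq_or_ne x ⊤ with rfl | h'
  · simp
  · have hb : x ≠ ⊥ := fun hb => by simp [hb] at h
    have := EReal.coe_toReal h' hb
    rw [← this, ← EReal.coe_zero, EReal.coe_le_coe_iff] at h
    exact h

lemma le_of_forall_small {A B C : ℝ} (h : ∀ s : ℝ, 0 < s → s < 1 → A ≤ B + s * C) : A ≤ B := by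
  have ht : Filter.Tendsto (fun s : ℝ => B + s * C) (𝓝[>] (0:ℝ)) (𝓝 B) := by
    have h0 : Filter.Tendsto (fun s : ℝ => B + s * C) (𝓝 (0:ℝ)) (𝓝 (B + 0 * C)) :=
      (tendsto_const_nhds.add ((continuous_id.mul continuous_const).tendsto 0))
    simpa using h0.mono_left nhdsWithin_le_nhds
  refine ge_of_tendsto ht ?_
  filter_upwards [Ioo_mem_nhdsGT_of_mem (by constructor <;> norm_num : (0:ℝ) ∈ Ico 0 1)]
    with s hs
  exact h s hs.1 hs.2

lemma concave_secant_anti {s : Set ℝ} {φ : ℝ → ℝ} (hf : ConcaveOn ℝ s φ) {a x y : ℝ}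
    (ha : a ∈ s) (hx : x ∈ s) (hy : y ∈ s) (hxa : x ≠ a) (hya : y ≠ a) (hxy : x ≤ y) :
    (φ y - φ a) / (y - a) ≤ (φ x - φ a) / (x - a) := by
  have key := hf.neg.secant_mono ha hx hy hxa hya hxy
  simp only [Pi.neg_apply] at key
  rw [← neg_le_neg_iff]
  have e1 : (-φ x - -φ a) / (x - a) = -((φ x - φ a) / (x - a)) := by ring
  have e2 : (-φ y - -φ a) / (y - a) = -((φ y - φ a) / (y - a)) := by ring
  rw [e1, e2] at key
  linarith

/-- Tangent line of a concave differentiable function lies above the graph. -/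
lemma concave_tangent_le {φ φ' : ℝ → ℝ} (hconc : ConcaveOn ℝ (Ici 0) φ)
    (hd : ∀ s ∈ Ioi (0:ℝ), HasDerivAt φ (φ' s) s) {a b : ℝ} (ha : 0 < a) (hb : 0 ≤ b) :
    φ b ≤ φ a + φ' a * (b - a) := by
  have hslope : Filter.Tendsto (slope φ a) (𝓝[≠] a) (𝓝 (φ' a)) :=
    hasDerivAt_iff_tendsto_slope.1 (hd a ha)
  rcases lt_trichotomy b a with hba | rfl | hab
  · -- b < a : φ' a ≤ slope of [b,a]
    have htend : Filter.Tendsto (slope φ a) (𝓝[<] a) (𝓝 (φ' a)) :=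
      hslope.mono_left (nhdsWithin_mono _ (fun s hs => ne_of_lt hs))
    have hle : φ' a ≤ (φ b - φ a) / (b - a) := by
      refine le_of_tendsto htend ?_
      filter_upwards [Ioo_mem_nhdsLT_of_mem (⟨hba, le_refl a⟩ : a ∈ Ioc b a)] with u hu
      rw [slope_def_field]
      exact concave_secant_anti hconc (mem_Ici.2 ha.le) (mem_Ici.2 hb)
        (mem_Ici.2 (hb.trans hu.1.le)) (ne_of_lt hba) (ne_of_lt hu.2) hu.1.le
    have hba' : b - a < 0 := by linarith
    have := (le_div_iff_of_neg hba').mp hle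
    linarith
  · simp
  · -- a < b
    have htend : Filter.Tendsto (slope φ a) (𝓝[>] a) (𝓝 (φ' a)) :=
      hslope.mono_left (nhdsWithin_mono _ (fun s hs => ne_of_gt hs))
    have hle : (φ b - φ a) / (b - a) ≤ φ' a := by
      refine ge_of_tendsto htend ?_
      filter_upwards [Ioo_mem_nhdsGT_of_mem (⟨le_refl a, hab⟩ : a ∈ Ico a b)] with u hu
      rw [slope_def_field]
      exact concave_secant_anti hconc (mem_Ici.2 ha.le) (mem_Ici.2 (ha.trans hu.1).le)
        (mem_Ici.2 (ha.trans hab).le) (ne_of_gt hu.1) (ne_of_gt hab) hu.2.le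
    have hba' : 0 < b - a := by linarith
    have := (div_le_iff₀ hba').mp hle
    linarith


/-- Ekeland's variational principle on a closed subset of a complete normed space. -/
lemma ekeland_aux {H : Type*} [NormedAddCommGroup H] [CompleteSpace H]
    {D : Set H} (hD : IsClosed D) {g : H → ℝ}
    (hg : LowerSemicontinuousOn g D) (hge : ∀ w ∈ D, 0 ≤ g w)
    {x : H} (hx : x ∈ D) {δ : ℝ} (hδ : 0 < δ) :
    ∃ y ∈ D, g y ≤ g x ∧ δ * dist y x ≤ g x - g y ∧ ∀ z ∈ D, g y ≤ g z + δ * dist z y := by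
  classical
  have key : ∀ (k : ℕ) (y : H), y ∈ D → ∃ y', y' ∈ D ∧ g y' + δ * dist y' y ≤ g y ∧
      ∀ z ∈ D, g z + δ * dist z y ≤ g y → g y' ≤ g z + (1/2)^k := by
    intro k y hy
    set S : Set H := {z | z ∈ D ∧ g z + δ * dist z y ≤ g y} with hS
    have hySmem : y ∈ S := ⟨hy, by simp⟩
    have hne : (g '' S).Nonempty := ⟨g y, y, hySmem, rfl⟩
    have hbdd : BddBelow (g '' S) := ⟨0, by rintro v ⟨z, hz, rfl⟩; exact hge z hz.1⟩
    have hlt : sInf (g '' S) < sInf (g '' S) + (1/2)^k := by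
      have : (0:ℝ) < (1/2)^k := by positivity
      linarith
    obtain ⟨v, ⟨z', hz', rfl⟩, hv⟩ := exists_lt_of_csInf_lt hne hlt
    refine ⟨z', hz'.1, hz'.2, fun z hz hzle => ?_⟩
    have : sInf (g '' S) ≤ g z := csInf_le hbdd ⟨z, ⟨hz, hzle⟩, rfl⟩
    linarith
  let next : ℕ → {w : H // w ∈ D} → {w : H // w ∈ D} := fun k w =>
    ⟨(key k w.1 w.2).choose, (key k w.1 w.2).choose_spec.1⟩
  let Y : ℕ → {w : H // w ∈ D} := fun n => Nat.rec ⟨x, hx⟩ next n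
  set yk : ℕ → H := fun n => (Y n).1 with hyk
  have hYD : ∀ n, yk n ∈ D := fun n => (Y n).2
  have hy0 : yk 0 = x := rfl
  have hstep : ∀ n, g (yk (n+1)) + δ * dist (yk (n+1)) (yk n) ≤ g (yk n) := fun n =>
    (key n (yk n) (hYD n)).choose_spec.2.1
  have hinf : ∀ n, ∀ z ∈ D, g z + δ * dist z (yk n) ≤ g (yk n) → g (yk (n+1)) ≤ g z + (1/2)^n :=
    fun n => (key n (yk n) (hYD n)).choose_spec.2.2
  have hanti : ∀ n, g (yk (n+1)) ≤ g (yk n) := by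
    intro n
    have := hstep n
    nlinarith [dist_nonneg (x := yk (n+1)) (y := yk n), hδ]
  have hanti' : Antitone fun n => g (yk n) := antitone_nat_of_succ_le hanti
  have hge' : ∀ n, 0 ≤ g (yk n) := fun n => hge _ (hYD n)
  have hchain : ∀ n j, n ≤ j → δ * dist (yk j) (yk n) ≤ g (yk n) - g (yk j) := by
    intro n j hnj
    induction j with
    | zero =>
      have : n = 0 := Nat.le_zero.mp hnj
      subst this; simp
    | succ j ih =>
      rcases Nat.lt_or_ge n (j+1) with h | h
      · have hnj' : n ≤ j := Nat.lt_succ_iff.mp h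
        have h1 := ih hnj'
        have h2 := hstep j
        have h3 := dist_triangle (yk (j+1)) (yk j) (yk n)
        nlinarith [hδ]
      · have : n = j + 1 := le_antisymm hnj h
        subst this; simp
  -- Cauchy sequence
  have hsum : Summable fun n => dist (yk n) (yk (n+1)) := by
    apply summable_of_sum_range_le (c := g x / δ) (fun n => dist_nonneg)
    intro n
    have hps : ∀ m, δ * (∑ i ∈ Finset.range m, dist (yk i) (yk (i+1))) ≤ g (yk 0) - g (yk m) := by
      intro m
      induction m with
      | zero => simp
      | succ m ih =>
        rw [Finset.sum_range_succ, mul_add]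
        have h2 := hstep m
        rw [dist_comm (yk (m+1)) (yk m)] at h2
        linarith
    have h1 := hps n
    rw [hy0] at h1
    have h2 := hge' n
    rw [le_div_iff₀ hδ]
    nlinarith
  obtain ⟨y, hy⟩ := cauchySeq_tendsto_of_complete (cauchySeq_of_summable_dist hsum)
  have hyD : y ∈ D := hD.mem_of_tendsto hy (Filter.Eventually.of_forall hYD)
  -- limit of values
  have hbdd : BddBelow (Set.range fun n => g (yk n)) := ⟨0, by rintro v ⟨n, rfl⟩; exact hge' n⟩
  set ℓ : ℝ := ⨅ n, g (yk n) with hℓ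
  have hgtend : Filter.Tendsto (fun n => g (yk n)) atTop (𝓝 ℓ) := tendsto_atTop_ciInf hanti' hbdd
  have hℓle : ∀ n, ℓ ≤ g (yk n) := fun n => ciInf_le hbdd n
  -- lower semicontinuity
  have hytend : Filter.Tendsto yk atTop (𝓝[D] y) :=
    tendsto_nhdsWithin_of_tendsto_nhds_of_eventually_within yk hy
      (Filter.Eventually.of_forall hYD)
  have hgy : g y ≤ ℓ := by
    by_contra hcon
    push_neg at hcon
    obtain ⟨cmid, hc1, hc2⟩ := exists_between hcon
    have hev : ∀ᶠ n in atTop, cmid < g (yk n) := hytend.eventually (hg y hyD cmid hc2)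
    have hev2 : ∀ᶠ n in atTop, g (yk n) < cmid := hgtend.eventually (gt_mem_nhds hc1)
    obtain ⟨n, h1, h2⟩ := (hev.and hev2).exists
    linarith
  -- distance to limit
  have hdistlim : ∀ n, δ * dist y (yk n) ≤ g (yk n) - ℓ := by
    intro n
    have htt : Filter.Tendsto (fun j => δ * dist (yk j) (yk n)) atTop
        (𝓝 (δ * dist y (yk n))) := (hy.dist tendsto_const_nhds).const_mul δ
    have htt2 : Filter.Tendsto (fun j => g (yk n) - g (yk j)) atTop (𝓝 (g (yk n) - ℓ)) :=
      tendsto_const_nhds.sub hgtend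
    refine le_of_tendsto_of_tendsto htt htt2 ?_
    refine eventually_atTop.2 ⟨n, fun j hj => ?_⟩
    exact hchain n j hj
  refine ⟨y, hyD, ?_, ?_, ?_⟩
  · have := hℓle 0
    rw [hy0] at this
    linarith [hgy]
  · have := hdistlim 0
    rw [hy0] at this
    linarith [hgy]
  · intro z hz
    by_contra hcon
    push_neg at hcon
    -- z beats y: z is in every S_n
    have hzS : ∀ n, g z + δ * dist z (yk n) ≤ g (yk n) := by
      intro n
      have h1 := dist_triangle z y (yk n)
      have h2 := hdistlim n
      have h3 : δ * dist z (yk n) ≤ δ * (dist z y + dist y (yk n)) := by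
        exact mul_le_mul_of_nonneg_left h1 hδ.le
      have h4 : g z + δ * dist z y < g y := hcon
      have h5 : g y ≤ ℓ := hgy
      rw [mul_add] at h3
      linarith
    have hzinf : ∀ n, g (yk (n+1)) ≤ g z + (1/2)^n := fun n => hinf n z hz (hzS n)
    have hℓz : ℓ ≤ g z := by
      have ht1 : Filter.Tendsto (fun n => g (yk (n+1))) atTop (𝓝 ℓ) :=
        hgtend.comp (tendsto_add_atTop_nat 1)
      have ht2 : Filter.Tendsto (fun n : ℕ => g z + (1/2:ℝ)^n) atTop (𝓝 (g z + 0)) :=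
        tendsto_const_nhds.add (tendsto_pow_atTop_nhds_zero_of_lt_one (by norm_num) (by norm_num))
      have := le_of_tendsto_of_tendsto ht1 (by simpa using ht2)
        (Filter.Eventually.of_forall hzinf)
      exact this
    have : 0 ≤ δ * dist z y := mul_nonneg hδ.le dist_nonneg
    linarith


/-- Existence of the proximal point: minimizer of `f z + τ‖z-y‖²`. -/
lemma prox_exists (f : H → EReal) (hbot : ∀ x, f x ≠ ⊥)
    (hlsc : LowerSemicontinuous f)
    (hconv : ∀ x y : H, ∀ t : ℝ, 0 < t → t < 1 →
      f (t • x + (1 - t) • y) ≤ (t : EReal) * f x + ((1 - t : ℝ) : EReal) * f y)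
    (hpos : ∀ w, 0 ≤ f w) (z₀ : H) (hz₀ : f z₀ = 0)
    (y : H) {τ : ℝ} (hτ : 0 < τ) :
    ∃ p : H, f p ≠ ⊤ ∧
      ∀ z, f p + ((τ * ‖p - y‖^2 : ℝ) : EReal) ≤ f z + ((τ * ‖z - y‖^2 : ℝ) : EReal) := by
  classical
  set Φ : H → EReal := fun z => f z + ((τ * ‖z - y‖^2 : ℝ) : EReal) with hΦ
  have hΦpos : ∀ z, 0 ≤ Φ z := fun z => add_nonneg (hpos z)
    (by rw [← EReal.coe_zero, EReal.coe_le_coe_iff]; positivity)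
  set m : EReal := ⨅ z, Φ z with hm
  have hm0 : 0 ≤ m := le_iInf hΦpos
  have hmle : m ≤ ((τ * ‖z₀ - y‖^2 : ℝ) : EReal) := by
    have : Φ z₀ = ((τ * ‖z₀ - y‖^2 : ℝ) : EReal) := by rw [hΦ]; simp [hz₀]
    rw [← this]; exact iInf_le _ z₀
  have hmtop : m ≠ ⊤ := ne_top_of_le_ne_top (EReal.coe_ne_top _) hmle
  have hmbot : m ≠ ⊥ := fun h => by simp [h] at hm0
  set mr : ℝ := m.toReal with hmr
  have hmeq : m = (mr : EReal) := (EReal.coe_toReal hmtop hmbot).symm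
  -- minimizing sequence
  have hseq : ∀ n : ℕ, ∃ z, Φ z < m + ((1 / (n+1) : ℝ) : EReal) := by
    intro n
    have h1 : m < m + ((1 / (n+1) : ℝ) : EReal) := by
      rw [hmeq, ← EReal.coe_add, EReal.coe_lt_coe_iff]
      have : (0:ℝ) < 1 / (n+1) := by positivity
      linarith
    exact iInf_lt_iff.mp h1
  choose zs hzs using hseq
  have hzstop : ∀ n, f (zs n) ≠ ⊤ := by
    intro n hcon
    have := hzs n
    rw [hΦ] at this
    simp only [hcon] at this
    rw [EReal.top_add_coe, hmeq, ← EReal.coe_add] at this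
    exact (not_top_lt) this
  set F : ℕ → ℝ := fun n => (f (zs n)).toReal with hF
  have hfeq : ∀ n, f (zs n) = ((F n : ℝ) : EReal) := fun n =>
    (EReal.coe_toReal (hzstop n) (hbot _)).symm
  set N : ℕ → ℝ := fun n => τ * ‖zs n - y‖^2 with hN
  have hΦeq : ∀ n, Φ (zs n) = ((F n + N n : ℝ) : EReal) := by
    intro n; rw [hΦ]; simp only; rw [hfeq n, ← EReal.coe_add]
  have hub : ∀ n, F n + N n < mr + 1 / (n+1) := by
    intro n
    have := hzs n
    rw [hΦeq n, hmeq, ← EReal.coe_add, EReal.coe_lt_coe_iff] at this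
    exact this
  have hlb : ∀ n, mr ≤ F n + N n := by
    intro n
    have : m ≤ Φ (zs n) := iInf_le _ _
    rw [hΦeq n, hmeq, EReal.coe_le_coe_iff] at this
    exact this
  have hFpos : ∀ n, 0 ≤ F n := by
    intro n
    have := hpos (zs n)
    rw [hfeq n, ← EReal.coe_zero, EReal.coe_le_coe_iff] at this
    exact this
  -- Cauchy via strong convexity of the quadratic
  have hCauchyEst : ∀ n k : ℕ, τ / 4 * ‖zs n - zs k‖^2 ≤
      (1/2) * (1/(n+1)) + (1/2) * (1/(k+1)) := by
    intro n k
    set u : H := (1/2 : ℝ) • zs n + (1 - (1/2) : ℝ) • zs k with hu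
    have hconvu : f u ≤ (((1/2) * F n + (1/2) * F k : ℝ) : EReal) := by
      have h1 := hconv (zs n) (zs k) (1/2) (by norm_num) (by norm_num)
      rw [hfeq n, hfeq k, ← EReal.coe_mul, ← EReal.coe_mul, ← EReal.coe_add] at h1
      rw [hu]
      convert h1 using 2
      norm_num
    -- parallelogram
    have hpar : ‖u - y‖^2 = (1/2) * ‖zs n - y‖^2 + (1/2) * ‖zs k - y‖^2
        - (1/4) * ‖zs n - zs k‖^2 := by
      have huy : u - y = (1/2 : ℝ) • ((zs n - y) + (zs k - y)) := by
        rw [hu]; module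
      have hd : zs n - zs k = (zs n - y) - (zs k - y) := by abel
      have hplaw := parallelogram_law_with_norm ℝ (zs n - y) (zs k - y)
      have e : ‖zs n - y + (zs k - y)‖^2 + ‖zs n - y - (zs k - y)‖^2
          = 2*(‖zs n - y‖^2 + ‖zs k - y‖^2) := by
        simpa only [pow_two] using hplaw
      rw [huy, hd, norm_smul, mul_pow]
      simp only [Real.norm_eq_abs]
      rw [show |(1/2 : ℝ)| ^ 2 = 1/4 by norm_num]
      linarith
    have hmu : m ≤ Φ u := iInf_le _ _
    have hΦu : Φ u ≤ (((1/2) * F n + (1/2) * F k + τ * ‖u - y‖^2 : ℝ) : EReal) := by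
      rw [hΦ]
      simp only
      calc f u + ((τ * ‖u - y‖^2 : ℝ) : EReal)
          ≤ (((1/2) * F n + (1/2) * F k : ℝ) : EReal) + ((τ * ‖u - y‖^2 : ℝ) : EReal) := by
            exact add_le_add hconvu le_rfl
        _ = (((1/2) * F n + (1/2) * F k + τ * ‖u - y‖^2 : ℝ) : EReal) := by
            rw [← EReal.coe_add]
    have hreal : mr ≤ (1/2) * F n + (1/2) * F k + τ * ‖u - y‖^2 := by
      have := hmu.trans hΦu
      rw [hmeq, EReal.coe_le_coe_iff] at this
      exact this
    have h1 := hub n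
    have h2 := hub k
    rw [hN] at h1 h2
    simp only at h1 h2
    nlinarith [hreal, hpar]
  have hCauchy : CauchySeq zs := by
    rw [Metric.cauchySeq_iff]
    intro ε hε
    obtain ⟨K, hK⟩ := exists_nat_gt (4 / (τ * ε^2))
    refine ⟨K, fun n hn k hk => ?_⟩
    have hd2 : τ / 4 * ‖zs n - zs k‖^2 ≤ (1/2) * (1/(n+1)) + (1/2) * (1/(k+1)) :=
      hCauchyEst n k
    have hKpos : (0:ℝ) < K + 1 := by positivity
    have hn1 : (1:ℝ)/(n+1) ≤ 1/(K+1) := by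
      apply one_div_le_one_div_of_le hKpos
      have : (K:ℝ) ≤ n := Nat.cast_le.2 hn
      linarith
    have hk1 : (1:ℝ)/(k+1) ≤ 1/(K+1) := by
      apply one_div_le_one_div_of_le hKpos
      have : (K:ℝ) ≤ k := Nat.cast_le.2 hk
      linarith
    have hKbig : 4 / (τ * ε^2) < K + 1 := by
      have : (K:ℝ) < K + 1 := by linarith
      linarith [hK]
    have hτε : 0 < τ * ε^2 := by positivity
    have hfrac : 1/(K+1) < τ * ε^2 / 4 := by
      rw [div_lt_div_iff₀ hKpos (by norm_num : (0:ℝ) < 4)] at *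
      rw [div_lt_iff₀ hτε] at hKbig
      nlinarith
    have : ‖zs n - zs k‖^2 < ε^2 := by nlinarith
    rw [dist_eq_norm]
    nlinarith [norm_nonneg (zs n - zs k), sq_nonneg (‖zs n - zs k‖ - ε)]
  obtain ⟨p, hp⟩ := cauchySeq_tendsto_of_complete hCauchy
  -- p is the minimizer
  have hΦp : Φ p ≤ m := by
    by_contra hcon
    push_neg at hcon
    obtain ⟨q, hq1, hq2⟩ := exists_between hcon
    have hqtop : q ≠ ⊤ := fun h => by rw [h] at hq2; exact (not_top_lt hq2)
    have hqbot : q ≠ ⊥ := fun h => by rw [h] at hq1; simp [hmeq] at hq1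
    set qr : ℝ := q.toReal with hqr
    have hqeq : q = (qr : EReal) := (EReal.coe_toReal hqtop hqbot).symm
    -- f p > qr - τ‖p-y‖²
    set br : ℝ := qr - τ * ‖p - y‖^2 with hbr
    have hfp : ((br : ℝ) : EReal) < f p := by
      by_contra hfp
      push_neg at hfp
      have : Φ p ≤ q := by
        rw [hΦ, hqeq]
        simp only
        calc f p + ((τ * ‖p - y‖^2 : ℝ) : EReal)
            ≤ ((br : ℝ) : EReal) + ((τ * ‖p - y‖^2 : ℝ) : EReal) := add_le_add hfp le_rfl
          _ = ((qr : ℝ) : EReal) := by rw [← EReal.coe_add, hbr]; norm_num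
      exact absurd (hq2.trans_le this) (lt_irrefl _)
    have hev : ∀ᶠ n in atTop, ((br : ℝ) : EReal) < f (zs n) :=
      (hp.eventually (hlsc p _ hfp))
    have hevF : ∀ᶠ n in atTop, br < F n := by
      filter_upwards [hev] with n hn
      rw [hfeq n, EReal.coe_lt_coe_iff] at hn
      exact hn
    -- but F n + N n → ≤ mr and N n → τ‖p-y‖²
    have hNlim : Filter.Tendsto N atTop (𝓝 (τ * ‖p - y‖^2)) := by
      have : Filter.Tendsto (fun n => ‖zs n - y‖) atTop (𝓝 ‖p - y‖) :=
        (continuous_norm.comp (continuous_id.sub continuous_const)).continuousAt.tendsto.comp hp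
      exact (this.pow 2).const_mul τ
    have hup : Filter.Tendsto (fun n => mr + 1/(n+1) - N n) atTop (𝓝 (mr + 0 - τ * ‖p - y‖^2)) := by
      refine Filter.Tendsto.sub ?_ hNlim
      exact tendsto_const_nhds.add (tendsto_one_div_add_atTop_nhds_zero_nat)
    have hbrle : br ≤ mr + 0 - τ * ‖p - y‖^2 := by
      refine ge_of_tendsto hup ?_
      filter_upwards [hevF] with n hn
      have := hub n
      linarith
    have : qr ≤ mr := by rw [hbr] at hbrle; linarith
    rw [hmeq, hqeq, EReal.coe_lt_coe_iff] at hq1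
    linarith
  have hfptop : f p ≠ ⊤ := by
    intro hcon
    rw [hΦ] at hΦp
    simp only [hcon, EReal.top_add_coe] at hΦp
    exact hmtop (top_le_iff.mp hΦp)
  exact ⟨p, hfptop, fun z => le_trans hΦp (iInf_le _ z)⟩


/-- The proximal point yields a subgradient. -/
lemma prox_subgrad (f : H → EReal) (hbot : ∀ x, f x ≠ ⊥)
    (hconv : ∀ x y : H, ∀ t : ℝ, 0 < t → t < 1 →
      f (t • x + (1 - t) • y) ≤ (t : EReal) * f x + ((1 - t : ℝ) : EReal) * f y)
    {p y : H} {τ : ℝ} (hτ : 0 < τ) (hp : f p ≠ ⊤)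
    (hmin : ∀ z, f p + ((τ * ‖p - y‖^2 : ℝ) : EReal) ≤ f z + ((τ * ‖z - y‖^2 : ℝ) : EReal)) :
    ((2*τ) • (y - p)) ∈ subdiff f p := by
  intro z
  rcases eq_or_ne (f z) ⊤ with hz | hz
  · rw [hz]; exact le_top
  set fp : ℝ := (f p).toReal with hfp
  set fz : ℝ := (f z).toReal with hfz
  have hfpe : f p = (fp : EReal) := (EReal.coe_toReal hp (hbot p)).symm
  have hfze : f z = (fz : EReal) := (EReal.coe_toReal hz (hbot z)).symm
  rw [hfpe, hfze, ← EReal.coe_add, EReal.coe_le_coe_iff]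
  -- real inequality : fp + ⟪u, z - p⟫ ≤ fz
  have key : ∀ s : ℝ, 0 < s → s < 1 →
      fp + ⟪(2*τ) • (y - p), z - p⟫ ≤ fz + s * (τ * ‖z - p‖^2) := by
    intro s hs0 hs1
    have h1 := hconv z p s hs0 hs1
    have h2 := hmin (s • z + (1 - s) • p)
    have h3 : f (s • z + (1 - s) • p) ≤ ((s * fz + (1 - s) * fp : ℝ) : EReal) := by
      rw [hfze, hfpe, ← EReal.coe_mul, ← EReal.coe_mul, ← EReal.coe_add] at h1
      exact h1
    have h4 : ((fp + τ * ‖p - y‖^2 : ℝ) : EReal) ≤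
        ((s * fz + (1 - s) * fp + τ * ‖s • z + (1 - s) • p - y‖^2 : ℝ) : EReal) := by
      calc ((fp + τ * ‖p - y‖^2 : ℝ) : EReal)
          = f p + ((τ * ‖p - y‖^2 : ℝ) : EReal) := by rw [hfpe, ← EReal.coe_add]
        _ ≤ f (s • z + (1 - s) • p) + ((τ * ‖s • z + (1 - s) • p - y‖^2 : ℝ) : EReal) := h2
        _ ≤ ((s * fz + (1 - s) * fp : ℝ) : EReal) + ((τ * ‖s • z + (1 - s) • p - y‖^2 : ℝ) : EReal) :=
            add_le_add h3 le_rfl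
        _ = ((s * fz + (1 - s) * fp + τ * ‖s • z + (1 - s) • p - y‖^2 : ℝ) : EReal) := by
            rw [← EReal.coe_add]
    rw [EReal.coe_le_coe_iff] at h4
    -- expand the norm
    have hexp : s • z + (1 - s) • p - y = (p - y) + s • (z - p) := by module
    have hnorm : ‖s • z + (1 - s) • p - y‖^2
        = ‖p - y‖^2 + 2 * (s * ⟪p - y, z - p⟫) + s^2 * ‖z - p‖^2 := by
      rw [hexp, norm_add_sq_real, real_inner_smul_right, norm_smul]
      simp only [Real.norm_eq_abs, mul_pow, sq_abs]
      try ring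
    rw [hnorm] at h4
    have hinner : ⟪(2*τ) • (y - p), z - p⟫ = -(2*τ) * ⟪p - y, z - p⟫ := by
      rw [real_inner_smul_left]
      have : (y - p : H) = -(p - y) := by abel
      rw [this, inner_neg_left]
      ring
    rw [hinner]
    -- h4 : fp + τ‖p-y‖² ≤ s fz + (1-s) fp + τ(‖p-y‖² + 2 s ⟪p-y,z-p⟫ + s²‖z-p‖²)
    -- divide by s
    nlinarith [h4, hs0, sq_nonneg s]
  refine le_of_forall_small (A := fp + ⟪(2*τ) • (y - p), z - p⟫) (B := fz)
    (C := τ * ‖z - p‖^2) key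


/-- **Corollary 3.3** (global characterization of Łojasiewicz inequalities for
convex functions): for a proper lower-semicontinuous convex `f` with `min f = 0`
and `φ ∈ 𝒦(0,∞)`, `c > 0`:
(i) if `φ'(f(x))·‖∂⁰f(x)‖ ≥ 1` whenever `f(x) > 0`, then
`dist(x, argmin f) ≤ φ(f(x))` whenever `f(x) > 0`;
(ii) conversely, if `s·φ'(s) ≥ c·φ(s)` for all `s > 0` and
`φ(f(x)) ≥ dist(x, argmin f)` whenever `f(x) > 0`, then
`φ'(f(x))·‖∂⁰f(x)‖ ≥ c` whenever `f(x) > 0`.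
The quantity `φ'(f(x))·‖∂⁰f(x)‖ ≥ c` (with `‖∂⁰f(x)‖ = dist(0,∂f(x)) ∈ [0,∞]`) is
expressed equivalently as `φ'(f(x))·‖u‖ ≥ c` for every `u ∈ ∂f(x)`. -/
theorem stmt2 (f : H → EReal)
    (hbot : ∀ x, f x ≠ ⊥) (htop : ∃ x, f x ≠ ⊤)
    (hlsc : LowerSemicontinuous f)
    (hconv : ∀ x y : H, ∀ t : ℝ, 0 < t → t < 1 →
      f (t • x + (1 - t) • y) ≤ (t : EReal) * f x + ((1 - t : ℝ) : EReal) * f y)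
    (hmin : ∃ z, z ∈ argminSet f ∧ f z = 0)
    (c : ℝ) (hc : 0 < c)
    (φ φ' : ℝ → ℝ)
    (hφcont : ContinuousOn φ (Ici 0))
    (hφderiv : ∀ s ∈ Ioi (0 : ℝ), HasDerivAt φ (φ' s) s)
    (hφ'cont : ContinuousOn φ' (Ioi 0))
    (hφconc : ConcaveOn ℝ (Ici 0) φ)
    (hφ0 : φ 0 = 0)
    (hφ'pos : ∀ s ∈ Ioi (0 : ℝ), 0 < φ' s) :
    ((∀ x, 0 < f x → ∀ u ∈ subdiff f x, 1 ≤ φ' ((f x).toReal) * ‖u‖) →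
      ∀ x, 0 < f x → f x ≠ ⊤ → Metric.infDist x (argminSet f) ≤ φ ((f x).toReal)) ∧
    ((∀ s ∈ Ioi (0 : ℝ), c * φ s ≤ s * φ' s) →
      (∀ x, 0 < f x → f x ≠ ⊤ → Metric.infDist x (argminSet f) ≤ φ ((f x).toReal)) →
      ∀ x, 0 < f x → ∀ u ∈ subdiff f x, c ≤ φ' ((f x).toReal) * ‖u‖) := by
  obtain ⟨z₀, hz₀min, hz₀⟩ := hmin
  have hpos : ∀ w, 0 ≤ f w := fun w => hz₀ ▸ hz₀min w
  constructor
  · -- Part (i)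
    intro hLoj x hfx hfxtop
    set r : ℝ := (f x).toReal with hr
    have hr0 : 0 < r := ER_toReal_pos hfx hfxtop
    have hfxe : f x = (r : EReal) := (EReal.coe_toReal hfxtop (hbot x)).symm
    -- monotonicity of φ
    have hφmono : StrictMonoOn φ (Ici 0) := by
      apply strictMonoOn_of_deriv_pos (convex_Ici 0) hφcont
      intro s hs
      rw [interior_Ici] at hs
      rw [(hφderiv s hs).deriv]
      exact hφ'pos s hs
    have hφnonneg : ∀ s : ℝ, 0 ≤ s → 0 ≤ φ s := by
      intro s hs
      rcases eq_or_lt_of_le hs with h | h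
      · rw [← h, hφ0]
      · rw [← hφ0]
        exact (hφmono (self_mem_Ici) (mem_Ici.2 hs) h).le
    have hε : 0 < φ r := by
      rw [← hφ0]
      exact hφmono self_mem_Ici (mem_Ici.2 hr0.le) hr0
    -- the sublevel set
    set D : Set H := {w | f w ≤ (r : EReal)} with hD
    have hDclosed : IsClosed D := hlsc.isClosed_preimage (r : EReal)
    have hxD : x ∈ D := by rw [hD]; exact hfxe.le
    set g : H → ℝ := fun w => φ ((f w).toReal) with hg
    have hDtop : ∀ w ∈ D, f w ≠ ⊤ := fun w hw => ne_top_of_le_ne_top (EReal.coe_ne_top r) hw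
    have hgnonneg : ∀ w ∈ D, 0 ≤ g w := fun w _ => hφnonneg _ (ER_toReal_nonneg (hpos w))
    have htoRle : ∀ w ∈ D, (f w).toReal ≤ r := by
      intro w hw
      have := EReal.toReal_le_toReal hw (hbot w) (EReal.coe_ne_top r)
      rwa [EReal.toReal_coe] at this
    -- g is lower semicontinuous on D
    have hglsc : LowerSemicontinuousOn g D := by
      intro y hyD v hv
      set sy : ℝ := (f y).toReal with hsy
      have hsy0 : 0 ≤ sy := ER_toReal_nonneg (hpos y)
      rcases eq_or_lt_of_le hsy0 with h0 | hsy0'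
      · have hv0 : v < 0 := by
          have : g y = 0 := by rw [hg]; simp only; rw [← hsy, ← h0, hφ0]
          rwa [this] at hv
        filter_upwards [self_mem_nhdsWithin] with w hw
        exact hv0.trans_le (hgnonneg w hw)
      · have hne : (𝓝[Ico 0 sy] sy).NeBot := by
          rw [← mem_closure_iff_nhdsWithin_neBot, closure_Ico hsy0'.ne]
          exact ⟨hsy0, le_refl sy⟩
        have hcw : Filter.Tendsto φ (𝓝[Ico 0 sy] sy) (𝓝 (φ sy)) :=
          (hφcont sy (mem_Ici.2 hsy0)).mono_left
            (nhdsWithin_mono _ (fun w hw => hw.1))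
        have hevφ : ∀ᶠ w in 𝓝[Ico 0 sy] sy, v < φ w :=
          hcw.eventually (eventually_gt_nhds hv)
        obtain ⟨s', hs'v, hs'mem⟩ := (hevφ.and self_mem_nhdsWithin).exists
        have hflt : ((s' : ℝ) : EReal) < f y := by
          rw [show f y = ((sy : ℝ) : EReal) from (EReal.coe_toReal (hDtop y hyD) (hbot y)).symm,
            EReal.coe_lt_coe_iff]
          exact hs'mem.2
        have hev2 : ∀ᶠ w in 𝓝 y, ((s' : ℝ) : EReal) < f w := hlsc y _ hflt
        filter_upwards [nhdsWithin_le_nhds hev2, self_mem_nhdsWithin] with w hw hwD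
        have h1 : s' ≤ (f w).toReal := by
          rw [show f w = (((f w).toReal : ℝ) : EReal) from
            (EReal.coe_toReal (hDtop w hwD) (hbot w)).symm, EReal.coe_lt_coe_iff] at hw
          exact hw.le
        calc v < φ s' := hs'v
          _ ≤ φ ((f w).toReal) := hφmono.monotoneOn (mem_Ici.2 hs'mem.1)
              (mem_Ici.2 (hs'mem.1.trans h1)) h1
    have hgx : g x = φ r := rfl
    -- main estimate via Ekeland
    have hmain : ∀ θ : ℝ, 0 < θ → θ < 1 →
        Metric.infDist x (argminSet f) ≤ φ r / θ := by
      intro θ hθ0 hθ1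
      obtain ⟨y, hyD, hgyx, hdyx, hek⟩ := ekeland_aux hDclosed hglsc hgnonneg hxD hθ0
      have hfy0 : f y = 0 := by
        by_contra hfy
        have hfypos : 0 < f y := lt_of_le_of_ne (hpos y) (Ne.symm hfy)
        set a : ℝ := (f y).toReal with ha
        have ha0 : 0 < a := ER_toReal_pos hfypos (hDtop y hyD)
        have hfye : f y = (a : EReal) := (EReal.coe_toReal (hDtop y hyD) (hbot y)).symm
        have hφ'a := hφ'pos a ha0
        have hφ'cont_a : ContinuousAt φ' a := hφ'cont.continuousAt (isOpen_Ioi.mem_nhds ha0)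
        have hlt : φ' a < φ' a / θ := by
          rw [lt_div_iff₀ hθ0]
          nlinarith
        have hevφ' : ∀ᶠ b in 𝓝 a, φ' b < φ' a / θ :=
          hφ'cont_a.eventually_lt continuousAt_const hlt
        rw [Metric.eventually_nhds_iff] at hevφ'
        obtain ⟨δ₁, hδ₁pos, hball⟩ := hevφ'
        set δ₀ : ℝ := min (δ₁/2) (a/2) with hδ₀
        have hδ₀pos : 0 < δ₀ := lt_min (by linarith) (by linarith)
        have hδ₀δ₁ : δ₀ < δ₁ := lt_of_le_of_lt (min_le_left _ _) (by linarith)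
        have hδ₀a : δ₀ ≤ a/2 := min_le_right _ _
        -- choose the prox parameter
        set τ : ℝ := max 1 (θ^2/(2 * δ₀ * (φ' a)^2)) with hτ
        have hτ0 : (0:ℝ) < τ := lt_of_lt_of_le one_pos (le_max_left _ _)
        have hτbig : θ^2/(2 * δ₀ * (φ' a)^2) ≤ τ := le_max_right _ _
        obtain ⟨p, hptop, hpmin⟩ := prox_exists f hbot hlsc hconv hpos z₀ hz₀ y hτ0
        have hu := prox_subgrad f hbot hconv hτ0 hptop hpmin
        set u : H := (2*τ) • (y - p) with huu
        have hfp_le_fy : f p ≤ f y := by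
          have h1 := hpmin y
          rw [sub_self, norm_zero] at h1
          simp only [ne_eq, OfNat.ofNat_ne_zero, not_false_eq_true, zero_pow, mul_zero,
            EReal.coe_zero, add_zero] at h1
          calc f p ≤ f p + ((τ * ‖p - y‖^2 : ℝ) : EReal) := by
                apply le_add_of_nonneg_right
                rw [← EReal.coe_zero, EReal.coe_le_coe_iff]
                positivity
            _ ≤ f y := h1
        set b : ℝ := (f p).toReal with hb
        have hfpe : f p = (b : EReal) := (EReal.coe_toReal hptop (hbot p)).symm
        have hb0 : 0 ≤ b := ER_toReal_nonneg (hpos p)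
        have hba : b ≤ a := by
          have := EReal.toReal_le_toReal hfp_le_fy (hbot p) (hDtop y hyD)
          rwa [← ha, ← hb] at this
        have hpD : p ∈ D := by
          rw [hD]
          exact hfp_le_fy.trans hyD
        have hsub_y : b + ⟪u, y - p⟫ ≤ a := by
          have h1 := hu y
          rw [hfpe, hfye, ← EReal.coe_add, EReal.coe_le_coe_iff] at h1
          exact h1
        set d : ℝ := ‖y - p‖ with hd
        have hd0 : 0 ≤ d := norm_nonneg _
        have hinner_u : ⟪u, y - p⟫ = 2*τ*d^2 := by
          rw [huu, real_inner_smul_left, real_inner_self_eq_norm_sq, ← hd]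
        have hdist : dist p y = d := by rw [dist_eq_norm, norm_sub_rev, ← hd]
        have hek_p : g y ≤ g p + θ * dist p y := hek p hpD
        have hgyv : g y = φ a := rfl
        have hgpv : g p = φ b := rfl
        rw [hgyv, hgpv, hdist] at hek_p
        have htan1 : φ b ≤ φ a + φ' a * (b - a) := concave_tangent_le hφconc hφderiv ha0 hb0
        have h7 : 2*τ*d^2 ≤ a - b := by linarith
        have h8 : φ a - φ b ≤ θ * d := by linarith
        have h9 : φ' a * (a - b) ≤ φ a - φ b := by nlinarith
        rcases eq_or_lt_of_le hd0 with hd_eq | hdpos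
        · -- d = 0 : p = y and u = 0, contradiction with Łojasiewicz at p
          have hyp : y - p = 0 := norm_eq_zero.mp (hd ▸ hd_eq.symm)
          have hyp' : y = p := sub_eq_zero.mp hyp
          have hu0 : u = 0 := by rw [huu, hyp, smul_zero]
          have hLp := hLoj p (by rw [← hyp']; exact hfypos) u hu
          rw [hu0, norm_zero, mul_zero] at hLp
          linarith
        · have h10 : φ' a * (2*τ*d^2) ≤ θ * d := by
            nlinarith [mul_le_mul_of_nonneg_left h7 hφ'a.le]
          have h11 : 2*τ*d*(φ' a) ≤ θ := by
            nlinarith [h10, hdpos, mul_pos hτ0 hdpos]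
          have h12 : (a - b) * φ' a ≤ θ * d := by nlinarith [h9, h8]
          have hτbig' : θ^2 ≤ 2 * δ₀ * (φ' a)^2 * τ := by
            rw [div_le_iff₀ (by positivity)] at hτbig
            linarith
          have hθd : θ * d ≤ δ₀ * φ' a := by
            nlinarith [mul_le_mul_of_nonneg_right h11 hθ0.le, hτbig',
              mul_pos (mul_pos (by norm_num : (0:ℝ) < 2) hτ0) hφ'a]
          have h13 : a - b ≤ δ₀ := by nlinarith [h12, hθd, hφ'a]
          have hbpos : 0 < b := by
            have := hδ₀a
            linarith
          have hfppos : 0 < f p := by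
            rw [hfpe]
            exact_mod_cast hbpos
          have hdistba : dist b a < δ₁ := by
            rw [Real.dist_eq, abs_of_nonpos (by linarith : b - a ≤ 0)]
            linarith
          have hφ'b : φ' b < φ' a / θ := hball hdistba
          have hLp := hLoj p hfppos u hu
          have hnu : ‖u‖ = 2*τ*d := by
            rw [huu, norm_smul, Real.norm_eq_abs,
              abs_of_pos (by positivity : (0:ℝ) < 2*τ), ← hd]
          rw [hnu] at hLp
          have hφ'bpos := hφ'pos b hbpos
          have hcontr : φ' b * (2*τ*d) < 1 := by
            have hθφ : 0 < θ / φ' a := div_pos hθ0 hφ'a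
            have h11' : 2*τ*d ≤ θ / φ' a := by
              rw [le_div_iff₀ hφ'a]
              linarith
            calc φ' b * (2*τ*d) ≤ φ' b * (θ/φ' a) :=
                  mul_le_mul_of_nonneg_left h11' hφ'bpos.le
              _ < (φ' a/θ) * (θ/φ' a) := mul_lt_mul_of_pos_right hφ'b hθφ
              _ = 1 := by field_simp
          have hLp' : φ' b * (2*τ*d) = φ' ((f p).toReal) * (2*τ*d) := by rw [← hb]
          rw [← hLp'] at hLp
          linarith
      -- y is a minimizer
      have hymin : y ∈ argminSet f := fun w => by rw [hfy0]; exact hpos w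
      have hgy0 : g y = 0 := by
        rw [hg]
        simp only
        rw [hfy0, EReal.toReal_zero, hφ0]
      have h15 : θ * dist y x ≤ φ r := by
        rw [hgx, hgy0] at hdyx
        linarith
      calc Metric.infDist x (argminSet f) ≤ dist x y :=
            Metric.infDist_le_dist_of_mem hymin
        _ = dist y x := dist_comm _ _
        _ ≤ φ r / θ := by
            rw [le_div_iff₀ hθ0]
            linarith
    -- conclude by letting θ → 1
    by_contra hcon
    push_neg at hcon
    set I : ℝ := Metric.infDist x (argminSet f) with hI
    have hIpos : 0 < I := hε.trans hcon
    set θ : ℝ := (φ r / I + 1)/2 with hθ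
    have hq : 0 < φ r / I := div_pos hε hIpos
    have hfr : φ r / I < 1 := (div_lt_one hIpos).mpr hcon
    have hθ0 : 0 < θ := by rw [hθ]; linarith
    have hθ1 : θ < 1 := by rw [hθ]; linarith
    have h1 := hmain θ hθ0 hθ1
    have h2 : φ r / θ < I := by
      rw [div_lt_iff₀ hθ0, hθ]
      have e : I * ((φ r / I + 1)/2) = (φ r + I)/2 := by
        field_simp
      rw [e]
      linarith
    linarith
  · -- Part (ii)
    intro hmod herr x hfx u hu
    rcases eq_or_ne (f x) ⊤ with htopx | htopx
    · exfalso
      have h1 := hu z₀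
      rw [htopx, EReal.top_add_coe, hz₀] at h1
      simp at h1
    · set s : ℝ := (f x).toReal with hs
      have hs0 : 0 < s := ER_toReal_pos hfx htopx
      have hfxe : f x = (s : EReal) := (EReal.coe_toReal htopx (hbot x)).symm
      have hSne : (argminSet f).Nonempty := ⟨z₀, hz₀min⟩
      have hmem0 : ∀ z ∈ argminSet f, f z = 0 := fun z hz =>
        le_antisymm (hz₀ ▸ hz z₀) (hpos z)
      have hkey : ∀ z ∈ argminSet f, s ≤ ‖u‖ * dist x z := by
        intro z hz
        have h1 := hu z
        rw [hmem0 z hz, hfxe, ← EReal.coe_add, ← EReal.coe_zero, EReal.coe_le_coe_iff] at h1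
        have h2 : ⟪u, z - x⟫ = -⟪u, x - z⟫ := by
          rw [show (z - x : H) = -(x - z) by abel, inner_neg_right]
        have h3 := real_inner_le_norm u (x - z)
        rw [dist_eq_norm]
        linarith
      have hu0 : u ≠ 0 := by
        intro h
        have h1 := hkey z₀ hz₀min
        rw [h, norm_zero, zero_mul] at h1
        linarith
      have hnu : 0 < ‖u‖ := norm_pos_iff.mpr hu0
      have hinf : s / ‖u‖ ≤ Metric.infDist x (argminSet f) := by
        by_contra hcon
        push_neg at hcon
        obtain ⟨z, hz, hdz⟩ := (infDist_lt_iff hSne).mp hcon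
        have h1 := hkey z hz
        rw [lt_div_iff₀ hnu] at hdz
        nlinarith
      have herr' := herr x hfx htopx
      rw [← hs] at herr'
      have hφpos : 0 < φ s := lt_of_lt_of_le (lt_of_lt_of_le (div_pos hs0 hnu) hinf) herr'
      have hmod' := hmod s hs0
      have h5 : s ≤ ‖u‖ * Metric.infDist x (argminSet f) := by
        rw [div_le_iff₀ hnu] at hinf
        linarith
      have hφ's := hφ'pos s hs0
      have hIle : Metric.infDist x (argminSet f) ≤ φ s := herr'
      have h6 : c * φ s ≤ (φ' s * ‖u‖) * φ s := by
        calc c * φ s ≤ s * φ' s := hmod'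
          _ ≤ (‖u‖ * Metric.infDist x (argminSet f)) * φ' s :=
              mul_le_mul_of_nonneg_right h5 hφ's.le
          _ ≤ (‖u‖ * φ s) * φ' s := by
              apply mul_le_mul_of_nonneg_right _ hφ's.le
              exact mul_le_mul_of_nonneg_left hIle (norm_nonneg u)
          _ = (φ' s * ‖u‖) * φ s := by ring
      exact le_of_mul_le_mul_right (by linarith) hφpos
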